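/- Let (X,Y) be discrete with joint distribution μ, let η : 𝒳 → 𝒰 and U = η(X), and let v(·|·) be any conditional distribution from 𝒰 to distributions on 𝒴. Then the cross-entropy risk satisfies E[−log v(Y|η(X))] = D(μ_{Y|U} ‖ v | μ_U) + I(X;Y|U) + H(Y|X), where D(μ_{Y|U} ‖ v | μ_U) = Σ_u μ_U(u) D(μ_{Y|U}(·|u) ‖ v(·|u)) ≥ 0. -/

import Mathlib

open Finset

noncomputable section

/-- Marginal distribution of the first coordinate of a joint distribution. -/
def margX {X Y : Type*} [Fintype Y] (μ : X → Y → ℝ) (x : X) : ℝ := ∑ y, μ x y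

/-- Marginal distribution of the second coordinate. -/
def margY {X Y : Type*} [Fintype X] (μ : X → Y → ℝ) (y : Y) : ℝ := ∑ x, μ x y

/-- Distribution of `U = η X`. -/
def margU {X Y U : Type*} [Fintype X] [Fintype Y] [DecidableEq U]
    (μ : X → Y → ℝ) (η : X → U) (u : U) : ℝ :=
  ∑ x, if η x = u then margX μ x else 0

/-- Joint probability `P(Y = y, η X = u)`. -/
def margYU {X Y U : Type*} [Fintype X] [DecidableEq U]
    (μ : X → Y → ℝ) (η : X → U) (y : Y) (u : U) : ℝ :=
  ∑ x, if η x = u then μ x y else 0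

/-- Joint distribution of the pair `(η X, Y)`. -/
def jointUY {X Y U : Type*} [Fintype X] [DecidableEq U]
    (μ : X → Y → ℝ) (η : X → U) : U → Y → ℝ :=
  fun u y => margYU μ η y u

/-- Shannon mutual information `I(X;Y)` of a joint distribution (natural log). -/
def MI {X Y : Type*} [Fintype X] [Fintype Y] (μ : X → Y → ℝ) : ℝ :=
  ∑ x, ∑ y, μ x y * Real.log (μ x y / (margX μ x * margY μ y))

/-- Conditional Shannon entropy `H(Y|X)`. -/
def condEnt {X Y : Type*} [Fintype X] [Fintype Y] (μ : X → Y → ℝ) : ℝ :=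
  -∑ x, ∑ y, μ x y * Real.log (μ x y / margX μ x)

/-- Conditional mutual information `I(X;Y|U)` where `U = η X` is a deterministic
function of `X`. -/
def condMI {X Y U : Type*} [Fintype X] [Fintype Y] [DecidableEq U]
    (μ : X → Y → ℝ) (η : X → U) : ℝ :=
  ∑ x, ∑ y, μ x y *
    Real.log (μ x y * margU μ η (η x) / (margX μ x * margYU μ η y (η x)))

/-- `μ` is a probability distribution on `X × Y`. -/
def IsDist {X Y : Type*} [Fintype X] [Fintype Y] (μ : X → Y → ℝ) : Prop :=
  (∀ x y, 0 ≤ μ x y) ∧ ∑ x, ∑ y, μ x y = 1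

/-- `X` and `Y` are conditionally independent given `U = η X`: for every `u` with
`P(U = u) > 0`, `P(X = x, Y = y | U = u) = P(X = x | U = u) · P(Y = y | U = u)`
(stated multiplied through by `P(U = u)²`). -/
def CondIndep {X Y U : Type*} [Fintype X] [Fintype Y] [DecidableEq U]
    (μ : X → Y → ℝ) (η : X → U) : Prop :=
  ∀ u, 0 < margU μ η u → ∀ x y,
    (if η x = u then μ x y else 0) * margU μ η u =
      (if η x = u then margX μ x else 0) * margYU μ η y u

/-- Cross-entropy risk `E_{(X,Y)∼μ}[− log v(Y|X)]` of a predictive conditional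
distribution `v`. -/
def risk {X Y : Type*} [Fintype X] [Fintype Y] (μ : X → Y → ℝ) (v : X → Y → ℝ) : ℝ :=
  ∑ x, ∑ y, μ x y * (-Real.log (v x y))

/-- Kullback–Leibler divergence between two joint distributions on `X × Y`. -/
def KL {X Y : Type*} [Fintype X] [Fintype Y] (μ ν : X → Y → ℝ) : ℝ :=
  ∑ x, ∑ y, μ x y * Real.log (μ x y / ν x y)

/-- Averaged conditional KL divergence `D(μ_{Y|X} ‖ v | μ_X)`. -/
def avgKL {X Y : Type*} [Fintype X] [Fintype Y] (μ : X → Y → ℝ) (v : X → Y → ℝ) : ℝ :=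
  ∑ x, margX μ x * ∑ y,
    (μ x y / margX μ x) * Real.log ((μ x y / margX μ x) / v x y)

/-- Averaged conditional KL divergence in the latent domain:
`D(μ_{Y|U} ‖ v | μ_U)` for the encoder `η`. -/
def decKL {X Y U : Type*} [Fintype X] [Fintype Y] [Fintype U] [DecidableEq U]
    (μ : X → Y → ℝ) (η : X → U) (v : U → Y → ℝ) : ℝ :=
  ∑ u, margU μ η u * ∑ y,
    (margYU μ η y u / margU μ η u) *
      Real.log ((margYU μ η y u / margU μ η u) / v u y)

section aux
variable {X Y U : Type*} [Fintype X] [Fintype Y] [Fintype U] [DecidableEq U]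

lemma margYU_nonneg (μ : X → Y → ℝ) (η : X → U) (h0 : ∀ x y, 0 ≤ μ x y)
    (y : Y) (u : U) : 0 ≤ margYU μ η y u :=
  Finset.sum_nonneg fun x _ => by split <;> [exact h0 x y; exact le_refl 0]

lemma sum_margYU (μ : X → Y → ℝ) (η : X → U) (u : U) :
    ∑ y, margYU μ η y u = margU μ η u := by
  unfold margYU margU margX
  rw [Finset.sum_comm]
  refine Finset.sum_congr rfl fun x _ => ?_
  by_cases hc : η x = u <;> simp [hc]

lemma margU_nonneg (μ : X → Y → ℝ) (η : X → U) (h0 : ∀ x y, 0 ≤ μ x y)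
    (u : U) : 0 ≤ margU μ η u := by
  rw [← sum_margYU]
  exact Finset.sum_nonneg fun y _ => margYU_nonneg μ η h0 y u

lemma margYU_eq_zero (μ : X → Y → ℝ) (η : X → U) (h0 : ∀ x y, 0 ≤ μ x y)
    {u : U} (hu : margU μ η u = 0) (y : Y) : margYU μ η y u = 0 := by
  have := (Finset.sum_eq_zero_iff_of_nonneg
    (fun y _ => margYU_nonneg μ η h0 y u)).mp ((sum_margYU μ η u).trans hu)
  exact this y (Finset.mem_univ y)

lemma sum_margYU_mul (μ : X → Y → ℝ) (η : X → U) (F : U → Y → ℝ) :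
    ∑ u, ∑ y, margYU μ η y u * F u y = ∑ x, ∑ y, μ x y * F (η x) y := by
  unfold margYU
  simp_rw [Finset.sum_mul, ite_mul, zero_mul]
  have h1 : ∀ y : Y, ∑ u, ∑ x, (if η x = u then μ x y * F u y else 0)
      = ∑ x, μ x y * F (η x) y := by
    intro y
    rw [Finset.sum_comm]
    refine Finset.sum_congr rfl fun x _ => ?_
    simp
  rw [Finset.sum_comm]
  simp_rw [h1]
  rw [Finset.sum_comm]

end aux

/-- cross-entropy decomposition
`E[−log v(Y|η(X))] = D(μ_{Y|U}‖v|μ_U) + I(X;Y|U) + H(Y|X)`, with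
`D(μ_{Y|U}‖v|μ_U) ≥ 0`. -/
theorem stmt5 {X Y U : Type*} [Fintype X] [Fintype Y] [Fintype U] [DecidableEq U]
    (μ : X → Y → ℝ) (η : X → U) (v : U → Y → ℝ) (hμ : IsDist μ)
    (hv0 : ∀ u y, 0 ≤ v u y) (hv1 : ∀ u, ∑ y, v u y = 1)
    (hvpos : ∀ u y, 0 < margYU μ η y u → 0 < v u y) :
    risk μ (fun x y => v (η x) y) = decKL μ η v + condMI μ η + condEnt μ ∧
      0 ≤ decKL μ η v := by
  obtain ⟨h0, h1⟩ := hμ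
  have hXnn : ∀ x, 0 ≤ margX μ x := fun x => Finset.sum_nonneg fun y _ => h0 x y
  have hle1 : ∀ x y, μ x y ≤ margX μ x := fun x y =>
    Finset.single_le_sum (fun y _ => h0 x y) (Finset.mem_univ y)
  have hle2 : ∀ x y, μ x y ≤ margYU μ η y (η x) := by
    intro x y
    have := Finset.single_le_sum
      (f := fun x' => if η x' = η x then μ x' y else 0)
      (fun x' _ => by split <;> [exact h0 x' y; exact le_refl 0]) (Finset.mem_univ x)
    simpa [margYU] using this
  have hle3 : ∀ x, margX μ x ≤ margU μ η (η x) := by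
    intro x
    have := Finset.single_le_sum
      (f := fun x' => if η x' = η x then margX μ x' else 0)
      (fun x' _ => by split <;> [exact hXnn x'; exact le_refl 0]) (Finset.mem_univ x)
    simpa [margU] using this
  -- rewrite decKL as a double sum over x, y
  have hdec : decKL μ η v = ∑ x, ∑ y, μ x y *
      Real.log ((margYU μ η y (η x) / margU μ η (η x)) / v (η x) y) := by
    unfold decKL
    rw [← sum_margYU_mul μ η
      (fun u y => Real.log ((margYU μ η y u / margU μ η u) / v u y))]
    refine Finset.sum_congr rfl fun u _ => ?_
    rcases eq_or_lt_of_le (margU_nonneg μ η h0 u) with h | h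
    · simp [← h, margYU_eq_zero μ η h0 h.symm]
    · rw [Finset.mul_sum]
      refine Finset.sum_congr rfl fun y _ => ?_
      field_simp
  constructor
  · -- the decomposition
    unfold risk condMI condEnt
    rw [hdec, ← Finset.sum_neg_distrib]
    simp_rw [← Finset.sum_neg_distrib, ← Finset.sum_add_distrib]
    refine Finset.sum_congr rfl fun x _ => Finset.sum_congr rfl fun y _ => ?_
    rcases eq_or_lt_of_le (h0 x y) with hz | hz
    · simp [← hz]
    · have hp : 0 < margX μ x := lt_of_lt_of_le hz (hle1 x y)
      have hm : 0 < margYU μ η y (η x) := lt_of_lt_of_le hz (hle2 x y)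
      have hM : 0 < margU μ η (η x) := lt_of_lt_of_le hp (hle3 x)
      have hv' : 0 < v (η x) y := hvpos (η x) y hm
      rw [Real.log_div (div_pos hm hM).ne' hv'.ne',
        Real.log_div hm.ne' hM.ne',
        Real.log_div (mul_pos hz hM).ne' (mul_pos hp hm).ne',
        Real.log_mul hz.ne' hM.ne', Real.log_mul hp.ne' hm.ne',
        Real.log_div hz.ne' hp.ne']
      ring
  · -- nonnegativity of decKL
    unfold decKL
    refine Finset.sum_nonneg fun u _ => ?_
    rcases eq_or_lt_of_le (margU_nonneg μ η h0 u) with h | h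
    · rw [← h]; simp
    · refine mul_nonneg h.le ?_
      have hqsum : ∑ y, margYU μ η y u / margU μ η u = 1 := by
        rw [← Finset.sum_div, sum_margYU μ η u, div_self h.ne']
      calc (0:ℝ) = ∑ y, (margYU μ η y u / margU μ η u - v u y) := by
            rw [Finset.sum_sub_distrib, hqsum, hv1 u, sub_self]
        _ ≤ _ := by
            refine Finset.sum_le_sum fun y _ => ?_
            set q := margYU μ η y u / margU μ η u with hqdef
            have hq0 : 0 ≤ q := div_nonneg (margYU_nonneg μ η h0 y u) h.le
            rcases eq_or_lt_of_le hq0 with hq | hq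
            · rw [← hq]; simpa using hv0 u y
            · have hm : 0 < margYU μ η y u := by
                by_contra hc
                push_neg at hc
                have : margYU μ η y u = 0 := le_antisymm hc (margYU_nonneg μ η h0 y u)
                rw [hqdef, this, zero_div] at hq
                exact lt_irrefl 0 hq
              have hv' : 0 < v u y := hvpos u y hm
              have hlog : Real.log (v u y / q) ≤ v u y / q - 1 :=
                Real.log_le_sub_one_of_pos (div_pos hv' hq)
              have h2 : q * (v u y / q) = v u y := by field_simp
              have h3 : Real.log (q / v u y) = - Real.log (v u y / q) := by
                rw [← Real.log_inv, inv_div]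
              rw [h3, mul_neg]
              nlinarith [mul_le_mul_of_nonneg_left hlog hq0]
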